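/- Let A be a commutative ring which is a ℂ-algebra equipped with an internal grading 𝒜 : ℕ × ℕ → Submodule ℂ A by the additive monoid ℕ × ℕ (so A is a graded ℂ-algebra with homogeneous components 𝒜 (p,q)). Suppose S ⊆ A is a set of homogeneous elements generating A as a ℂ-algebra (Algebra.adjoin ℂ S = ⊤), such that every s ∈ S lies in some component 𝒜 (a,b) with b ≤ a + 1. If 𝒜 (0,1) = 0, then 𝒜 (1,q) = 0 for every natural number q ≥ 3. -/

import Mathlib

/-- Abstract content of the vanishing statement (3.9): if a `ℕ × ℕ`-graded commutative
`ℂ`-algebra `A` is generated by homogeneous elements whose bidegrees `(a, b)` satisfy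
`b ≤ a + 1`, and `𝒜 (0,1) = 0`, then `𝒜 (1,q) = 0` for all `q ≥ 3`. -/
theorem graded_component_one_q_eq_bot
    (A : Type*) [CommRing A] [Algebra ℂ A]
    (𝒜 : ℕ × ℕ → Submodule ℂ A) [GradedAlgebra 𝒜]
    (S : Set A)
    (hgen : Algebra.adjoin ℂ S = ⊤)
    (hhom : ∀ s ∈ S, ∃ a b : ℕ, b ≤ a + 1 ∧ s ∈ 𝒜 (a, b))
    (h01 : 𝒜 (0, 1) = ⊥) :
    ∀ q : ℕ, 3 ≤ q → 𝒜 (1, q) = ⊥ := by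
  classical
  -- the "good" set of bidegrees
  set G : Set (ℕ × ℕ) :=
    {d | 2 ≤ d.1 ∨ (d.1 = 1 ∧ d.2 ≤ 2) ∨ d = (0, 0)} with hGdef
  have hG0 : ((0, 0) : ℕ × ℕ) ∈ G := by simp [hGdef]
  have hGadd : ∀ d ∈ G, ∀ e ∈ G, d + e ∈ G := by
    rintro ⟨d1, d2⟩ hd ⟨e1, e2⟩ he
    simp only [hGdef, Set.mem_setOf_eq, Prod.mk.injEq, Prod.mk_add_mk] at *
    omega
  -- the submodule spanned by the good components
  set M : Submodule ℂ A := ⨆ d : G, 𝒜 d.val with hMdef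
  have hle : ∀ d ∈ G, 𝒜 d ≤ M := fun d hd => le_iSup (fun d : G => 𝒜 d.val) ⟨d, hd⟩
  have h1 : (1 : A) ∈ M := hle _ hG0 (SetLike.one_mem_graded 𝒜)
  have hmul : ∀ x y : A, x ∈ M → y ∈ M → x * y ∈ M := by
    intro x y hx hy
    refine Submodule.iSup_induction (motive := fun x => x * y ∈ M) _ hx ?_ (by simp) ?_
    · rintro ⟨d, hd⟩ x hxd
      refine Submodule.iSup_induction (motive := fun y => x * y ∈ M) _ hy ?_ (by simp) ?_
      · rintro ⟨e, he⟩ y hye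
        exact hle _ (hGadd d hd e he) (SetLike.mul_mem_graded hxd hye)
      · intro y₁ y₂ h₁ h₂
        rw [mul_add]; exact M.add_mem h₁ h₂
    · intro x₁ x₂ h₁ h₂
      rw [add_mul]; exact M.add_mem h₁ h₂
  have hSM : S ⊆ (M : Set A) := by
    intro s hs
    obtain ⟨a, b, hab, hmem⟩ := hhom s hs
    rcases Nat.lt_or_ge a 1 with ha | ha
    · interval_cases a
      · interval_cases b
        · exact hle _ hG0 hmem
        · rw [h01, Submodule.mem_bot] at hmem
          rw [hmem]; exact M.zero_mem
    · rcases Nat.lt_or_ge a 2 with ha2 | ha2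
      · interval_cases a
        exact hle (1, b) (Or.inr (Or.inl ⟨rfl, hab⟩)) hmem
      · exact hle (a, b) (Or.inl ha2) hmem
  -- `M` is a subalgebra containing `S`, hence all of `A`
  have hMtop : M = ⊤ := by
    have : Algebra.adjoin ℂ S ≤ M.toSubalgebra h1 hmul :=
      Algebra.adjoin_le hSM
    rw [hgen] at this
    exact top_le_iff.mp fun x _ => this trivial
  intro q hq
  rw [eq_bot_iff]
  intro x hx
  have hxM : x ∈ M := by rw [hMtop]; trivial
  have hproj : (DirectSum.decompose 𝒜 x (1, q) : A) = 0 := by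
    refine Submodule.iSup_induction
      (motive := fun y => (DirectSum.decompose 𝒜 y (1, q) : A) = 0) _ hxM ?_ (by simp) ?_
    · rintro ⟨d, hd⟩ y hyd
      have hne : d ≠ (1, q) := by
        rintro rfl
        simp only [hGdef, Set.mem_setOf_eq, Prod.mk.injEq] at hd
        omega
      exact DirectSum.decompose_of_mem_ne 𝒜 hyd hne
    · intro y₁ y₂ h₁ h₂
      rw [DirectSum.decompose_add, DirectSum.add_apply, Submodule.coe_add, h₁, h₂, add_zero]
  rw [DirectSum.decompose_of_mem_same 𝒜 hx] at hproj
  simp [hproj]
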